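/- arXiv:1511.04039 — 3 statements merged into one kernel-verified Lean document; each statement's English description precedes it below -/
import Mathlib

section
/- For any delta operator 𝔡 and grid Z = (z_i)_{i≥0} in K, there exists a unique sequence (t_n)_{n≥0} of polynomials with deg t_n = n satisfying ε_{z_i}(𝔡^i(t_n)) = n!·δ_{i,n} for all i, n ∈ ℕ (the generalized Gončarov basis). -/
open Polynomial

/-- The shift operator `E_a : K[x] → K[x]`, `f(x) ↦ f(x+a)`, as a linear endomorphism. -/
noncomputable def shiftOp (K : Type*) [Field K] (a : K) : Module.End K (Polynomial K) :=
  (aeval (X + C a) : Polynomial K →ₐ[K] Polynomial K).toLinearMap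

/-- A linear operator on `K[x]` is shift-invariant if it commutes with every shift `E_a`. -/
def IsShiftInvariant {K : Type*} [Field K] (s : Module.End K (Polynomial K)) : Prop :=
  ∀ a : K, s ∘ₗ shiftOp K a = shiftOp K a ∘ₗ s

/-- A delta operator: shift-invariant and sends `X` to a nonzero constant. -/
def IsDeltaOperator {K : Type*} [Field K] (d : Module.End K (Polynomial K)) : Prop :=
  IsShiftInvariant d ∧ ∃ c : K, c ≠ 0 ∧ d X = C c

/-- The sequence of basic polynomials of a delta operator `d`. -/
def IsBasicSequence {K : Type*} [Field K] (d : Module.End K (Polynomial K))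
    (p : ℕ → Polynomial K) : Prop :=
  p 0 = 1 ∧ (∀ n, 1 ≤ n → (p n).eval 0 = 0) ∧
    ∀ n, 1 ≤ n → d (p n) = (n : K) • p (n - 1)

/-- The generalized Gončarov basis associated with the pair `(d, z)`:
`deg t_n = n` and `ε_{z_i}(d^i t_n) = n! δ_{i,n}`. -/
def IsGoncarovBasis {K : Type*} [Field K] (d : Module.End K (Polynomial K))
    (z : ℕ → K) (t : ℕ → Polynomial K) : Prop :=
  ∀ n, (t n).natDegree = n ∧
    ∀ i, ((d ^ i) (t n)).eval (z i) = if i = n then (n.factorial : K) else 0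

section Aux

variable {K : Type*} [Field K] {d : Module.End K (Polynomial K)}

lemma shift_apply (a : K) (f : Polynomial K) : shiftOp K a f = f.comp (X + C a) := by
  simp [shiftOp, aeval_def, comp, algebraMap_eq]

lemma si_apply (h : IsShiftInvariant d) (a : K) (f : Polynomial K) :
    d (f.comp (X + C a)) = (d f).comp (X + C a) := by
  have := congrArg (fun s : Module.End K (Polynomial K) => s f) (h a)
  simpa [shift_apply] using this

lemma dXpow_formula [CharZero K] (h : IsShiftInvariant d) (n : ℕ) :
    d (X ^ n) = ∑ k ∈ Finset.range (n + 1),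
      C ((n.choose k : K) * (d (X ^ k)).eval 0) * X ^ (n - k) := by
  apply Polynomial.funext
  intro a
  have h1 := si_apply h a (X ^ n)
  rw [pow_comp, X_comp] at h1
  have h2 : ((X + C a) ^ n : Polynomial K) =
      ∑ k ∈ Finset.range (n + 1), (a ^ (n - k) * (n.choose k : K)) • X ^ k := by
    rw [add_pow]
    refine Finset.sum_congr rfl fun k _ => ?_
    rw [smul_eq_C_mul, map_mul, ← C_pow, ← C_eq_natCast]
    ring
  have h3 := congrArg (Polynomial.eval 0) h1
  rw [h2, map_sum] at h3
  simp only [LinearMap.map_smul, eval_finset_sum, eval_smul, smul_eq_mul, eval_comp, eval_add,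
    eval_X, eval_C, zero_add] at h3
  rw [eval_finset_sum]
  rw [← h3]
  refine Finset.sum_congr rfl fun k _ => ?_
  simp only [eval_mul, eval_pow, eval_C, eval_X]
  ring

lemma d_one [CharZero K] (h : IsShiftInvariant d) {c : K} (hdX : d X = C c) :
    d 1 = 0 := by
  have h0 := dXpow_formula h 0
  simp only [zero_add, Finset.sum_range_one, pow_zero, Nat.choose_self, Nat.cast_one, one_mul,
    Nat.sub_self, mul_one] at h0
  -- h0 : d 1 = C ((d 1).eval 0)
  have h1 := dXpow_formula h 1
  rw [Finset.sum_range_succ, Finset.sum_range_one] at h1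
  simp only [pow_zero, pow_one, Nat.choose_zero_right, Nat.choose_one_right, Nat.cast_one,
    one_mul, Nat.sub_self, Nat.sub_zero, hdX, eval_C, mul_one] at h1
  -- h1 : C c = C ((d 1).eval 0) * X + C c
  have h2 : C ((d 1).eval 0) * X = 0 := by linear_combination -h1
  rcases mul_eq_zero.mp h2 with h3 | h3
  · rw [h0]; exact h3
  · exact absurd h3 X_ne_zero

lemma d_C [CharZero K] (h : IsShiftInvariant d) {c : K} (hdX : d X = C c) (r : K) :
    d (C r) = 0 := by
  have : (C r : Polynomial K) = r • 1 := by rw [smul_eq_C_mul, mul_one]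
  rw [this, map_smul, d_one h hdX, smul_zero]

lemma d_natDegree_eq_zero [CharZero K] (h : IsShiftInvariant d) {c : K} (hdX : d X = C c)
    {f : Polynomial K} (hf : f.natDegree = 0) : d f = 0 := by
  rw [eq_C_of_natDegree_le_zero hf.le, d_C h hdX]

lemma dXpow_deg [CharZero K] (h : IsShiftInvariant d) {c : K} (hdX : d X = C c)
    {n : ℕ} (hn : 1 ≤ n) :
    (d (X ^ n)).natDegree ≤ n - 1 ∧ (d (X ^ n)).coeff (n - 1) = n * c := by
  have hb0 : (d ((X : Polynomial K) ^ 0)).eval 0 = 0 := by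
    rw [pow_zero, d_one h hdX, eval_zero]
  have hb0' : (d (1 : Polynomial K)).eval 0 = 0 := by
    rw [d_one h hdX, eval_zero]
  have hb1 : (d ((X : Polynomial K) ^ 1)).eval 0 = c := by
    rw [pow_one, hdX, eval_C]
  constructor
  · rw [dXpow_formula h n]
    apply natDegree_sum_le_of_forall_le
    intro k hk
    rcases Nat.eq_zero_or_pos k with rfl | hk1
    · simp [hb0, hb0']
    · refine le_trans (natDegree_C_mul_le _ _) ?_
      rw [natDegree_X_pow]
      simp only [Finset.mem_range] at hk
      omega
  · rw [dXpow_formula h n, finset_sum_coeff]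
    have key : ∀ k ∈ Finset.range (n + 1),
        (C ((n.choose k : K) * (d (X ^ k)).eval 0) * X ^ (n - k)).coeff (n - 1) =
          if k = 1 then (n : K) * c else 0 := by
      intro k hk
      simp only [Finset.mem_range] at hk
      rw [coeff_C_mul, coeff_X_pow]
      rcases eq_or_ne k 1 with rfl | hk1
      · rw [if_pos rfl, if_pos rfl, mul_one, pow_one, hdX, eval_C, Nat.choose_one_right]
      · rw [if_neg hk1]
        rcases eq_or_ne k 0 with rfl | hk0
        · rw [hb0, mul_zero, zero_mul]
        · rw [if_neg (by omega : ¬ (n - 1 = n - k)), mul_zero]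
    rw [Finset.sum_congr rfl key, Finset.sum_ite_eq' (Finset.range (n + 1)) 1
      (fun _ => (n : K) * c), if_pos (Finset.mem_range.mpr (by omega))]

lemma d_deg [CharZero K] (h : IsShiftInvariant d) {c : K} (hdX : d X = C c)
    {f : Polynomial K} (hf1 : 1 ≤ f.natDegree) :
    (d f).natDegree ≤ f.natDegree - 1 ∧
      (d f).coeff (f.natDegree - 1) = (f.natDegree : K) * c * f.leadingCoeff := by
  set m := f.natDegree with hm
  have hdf : d f = ∑ i ∈ Finset.range (m + 1), f.coeff i • d (X ^ i) := by
    conv_lhs => rw [as_sum_range' f (m + 1) (lt_add_one m)]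
    rw [map_sum]
    exact Finset.sum_congr rfl fun i _ => by rw [← smul_X_eq_monomial, map_smul]
  constructor
  · rw [hdf]
    apply natDegree_sum_le_of_forall_le
    intro i hi
    simp only [Finset.mem_range] at hi
    rcases Nat.eq_zero_or_pos i with rfl | hi1
    · rw [pow_zero, d_one h hdX, smul_zero, natDegree_zero]; omega
    · refine le_trans (natDegree_smul_le _ _) (le_trans (dXpow_deg h hdX hi1).1 (by omega))
  · rw [hdf, finset_sum_coeff]
    rw [Finset.sum_eq_single_of_mem m (Finset.self_mem_range_succ m)]
    · rw [coeff_smul, (dXpow_deg h hdX hf1).2, leadingCoeff, ← hm, smul_eq_mul]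
      ring
    · intro i hi hine
      simp only [Finset.mem_range] at hi
      rw [coeff_smul]
      rcases Nat.eq_zero_or_pos i with rfl | hi1
      · rw [pow_zero, d_one h hdX, coeff_zero, smul_zero]
      · rw [coeff_eq_zero_of_natDegree_lt (lt_of_le_of_lt (dXpow_deg h hdX hi1).1 (by omega)),
          smul_zero]

lemma d_deg_eq [CharZero K] (h : IsShiftInvariant d) {c : K} (hc : c ≠ 0) (hdX : d X = C c)
    {f : Polynomial K} (hf0 : f ≠ 0) (hf1 : 1 ≤ f.natDegree) :
    (d f).natDegree = f.natDegree - 1 ∧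
      (d f).leadingCoeff = (f.natDegree : K) * c * f.leadingCoeff := by
  obtain ⟨h1, h2⟩ := d_deg h hdX hf1
  have hne : (d f).coeff (f.natDegree - 1) ≠ 0 := by
    rw [h2]
    exact mul_ne_zero (mul_ne_zero (Nat.cast_ne_zero.mpr (by omega)) hc)
      (leadingCoeff_ne_zero.mpr hf0)
  have hdeg : (d f).natDegree = f.natDegree - 1 :=
    le_antisymm h1 (le_natDegree_of_ne_zero hne)
  exact ⟨hdeg, by rw [leadingCoeff, hdeg, h2]⟩

lemma d_pow_eval [CharZero K] (h : IsShiftInvariant d) {c : K} (hc : c ≠ 0) (hdX : d X = C c) :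
    ∀ (m : ℕ) (f : Polynomial K), f.natDegree = m →
      (d ^ m) f = C ((m.factorial : K) * c ^ m * f.coeff m) := by
  intro m
  induction m with
  | zero =>
    intro f hf
    rw [pow_zero, Module.End.one_apply]
    nth_rewrite 1 [eq_C_of_natDegree_le_zero hf.le]
    simp
  | succ m ih =>
    intro f hf
    have hf0 : f ≠ 0 := fun h0 => by simp [h0] at hf
    obtain ⟨hdeg, hlead⟩ := d_deg_eq h hc hdX hf0 (by omega)
    rw [pow_succ, Module.End.mul_apply, ih (d f) (by omega)]
    have hcoeff : (d f).coeff m = (d f).leadingCoeff := by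
      rw [leadingCoeff, hdeg, hf]; norm_num
    rw [hcoeff, hlead, hf]
    have : f.leadingCoeff = f.coeff (m + 1) := by rw [leadingCoeff, hf]
    rw [this]
    congr 1
    push_cast [Nat.factorial_succ]
    ring

lemma d_pow_zero_of_lt [CharZero K] (h : IsShiftInvariant d) {c : K} (hdX : d X = C c) :
    ∀ (i : ℕ) (f : Polynomial K), f.natDegree < i → (d ^ i) f = 0 := by
  intro i
  induction i with
  | zero => intro f hf; omega
  | succ i ih =>
    intro f hf
    rw [pow_succ, Module.End.mul_apply]
    rcases Nat.eq_zero_or_pos f.natDegree with h0 | h1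
    · rw [d_natDegree_eq_zero h hdX h0, map_zero]
    · exact ih (d f) (lt_of_le_of_lt (d_deg h hdX h1).1 (by omega))

lemma d_pow_eval_ne_zero [CharZero K] (h : IsShiftInvariant d) {c : K} (hc : c ≠ 0)
    (hdX : d X = C c) {f : Polynomial K} (hf : f ≠ 0) (w : K) :
    ((d ^ f.natDegree) f).eval w ≠ 0 := by
  rw [d_pow_eval h hc hdX f.natDegree f rfl, eval_C]
  exact mul_ne_zero (mul_ne_zero (Nat.cast_ne_zero.mpr (Nat.factorial_ne_zero _))
    (pow_ne_zero _ hc)) (leadingCoeff_ne_zero.mpr hf)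

end Aux

theorem stmt4 {K : Type*} [Field K] [CharZero K] (d : Module.End K (Polynomial K))
    (hd : IsDeltaOperator d) (z : ℕ → K) :
    ∃! t : ℕ → Polynomial K, IsGoncarovBasis d z t := by
  obtain ⟨hsi, c, hc, hdX⟩ := hd
  have key : ∀ n : ℕ, ∃ f : Polynomial K, f ∈ degreeLT K (n + 1) ∧
      ∀ i : Fin (n + 1),
        ((d ^ (i : ℕ)) f).eval (z i) = if (i : ℕ) = n then (n.factorial : K) else 0 := by
    intro n
    let Φ : degreeLT K (n + 1) →ₗ[K] (Fin (n + 1) → K) :=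
      { toFun := fun f i => ((d ^ (i : ℕ)) f.1).eval (z i)
        map_add' := fun f g => by funext i; simp
        map_smul' := fun r f => by funext i; simp }
    have hinj : Function.Injective Φ := by
      rw [← LinearMap.ker_eq_bot, LinearMap.ker_eq_bot']
      intro g hg
      refine Subtype.ext ?_
      by_contra hg0
      have hdegg : g.1.natDegree < n + 1 :=
        (natDegree_lt_iff_degree_lt hg0).mpr (mem_degreeLT.mp g.2)
      have h2 : ((d ^ g.1.natDegree) g.1).eval (z g.1.natDegree) = 0 :=
        congrFun hg ⟨g.1.natDegree, hdegg⟩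
      exact d_pow_eval_ne_zero hsi hc hdX hg0 _ h2
    have hfin : FiniteDimensional K (degreeLT K (n + 1)) :=
      (degreeLTEquiv K (n + 1)).symm.finiteDimensional
    have hsurj : Function.Surjective Φ :=
      (LinearMap.injective_iff_surjective_of_finrank_eq_finrank
        ((degreeLTEquiv K (n + 1)).finrank_eq)).mp hinj
    obtain ⟨f, hf⟩ := hsurj (fun i => if (i : ℕ) = n then (n.factorial : K) else 0)
    exact ⟨f.1, f.2, fun i => congrFun hf i⟩
  choose t ht1 ht2 using key
  have tne : ∀ n, t n ≠ 0 := by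
    intro n h0
    have := ht2 n ⟨n, lt_add_one n⟩
    rw [h0] at this
    simp only [map_zero, eval_zero, Fin.val_mk, if_pos rfl] at this
    exact (Nat.cast_ne_zero.mpr (Nat.factorial_ne_zero n)) this.symm
  have tdeg : ∀ n, (t n).natDegree = n := by
    intro n
    have hle : (t n).natDegree < n + 1 :=
      (natDegree_lt_iff_degree_lt (tne n)).mpr (mem_degreeLT.mp (ht1 n))
    by_contra hne
    have := ht2 n ⟨(t n).natDegree, hle⟩
    simp only [Fin.val_mk] at this
    rw [if_neg hne] at this
    exact d_pow_eval_ne_zero hsi hc hdX (tne n) _ this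
  have hGt : IsGoncarovBasis d z t := by
    intro n
    refine ⟨tdeg n, fun i => ?_⟩
    rcases lt_or_ge i (n + 1) with hi | hi
    · simpa using ht2 n ⟨i, hi⟩
    · rw [d_pow_zero_of_lt hsi hdX i (t n) (by rw [tdeg n]; omega), eval_zero,
        if_neg (by omega)]
  refine ⟨t, hGt, ?_⟩
  intro t' ht'
  funext n
  have hsub : ∀ i, ((d ^ i) (t' n - t n)).eval (z i) = 0 := by
    intro i
    rw [map_sub, eval_sub, (ht' n).2 i, (hGt n).2 i, sub_self]
  by_contra hne
  have hg0 : t' n - t n ≠ 0 := sub_ne_zero.mpr hne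
  exact d_pow_eval_ne_zero hsi hc hdX hg0 _ (hsub (t' n - t n).natDegree)
end

section
/- Linear recurrence: if (t_n) is the generalized Gončarov basis for (𝔡, Z) and (p_n) the basic sequence of 𝔡, then p_n(x) = Σ_{i=0}^n C(n,i) p_{n−i}(z_i) t_i(x) for all n; equivalently t_n(x) = p_n(x) − Σ_{i=0}^{n−1} C(n,i) p_{n−i}(z_i) t_i(x). -/
open Polynomial

section

variable {K : Type*} [Field K] (a : K)

lemma shiftOp_apply (f : Polynomial K) : shiftOp K a f = taylor a f := by
  simp [shiftOp, taylor_apply, aeval_def, comp, algebraMap_eq]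

variable {d : Module.End K (Polynomial K)}

lemma delta_C (hd : IsDeltaOperator d) (a : K) : d (C a) = 0 := by
  obtain ⟨hsi, c, hc, hdX⟩ := hd
  have h := congrArg (fun (L : Module.End K (Polynomial K)) => L X) (hsi a)
  simp only [LinearMap.comp_apply, shiftOp_apply, taylor_apply, X_comp] at h
  rw [hdX, map_add, hdX, C_comp] at h
  simpa using h

lemma delta_one (hd : IsDeltaOperator d) : d 1 = 0 := by
  have := delta_C hd 1; rwa [C_1] at this

lemma shiftInv_expand (hsi : IsShiftInvariant d) (f : Polynomial K) [CharZero K] :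
    d f = ∑ k ∈ Finset.range (f.natDegree + 1),
      ((d (X ^ k)).eval 0) • (hasseDeriv k f) := by
  apply Polynomial.funext
  intro r
  have key : ∀ g : Polynomial K, (d g).eval r = (d (taylor r g)).eval 0 := by
    intro g
    have h := congrArg (fun (L : Module.End K (Polynomial K)) => L g) (hsi r)
    simp only [LinearMap.comp_apply, shiftOp_apply] at h
    rw [h, taylor_apply, eval_comp]
    simp
  rw [key f]
  have hdeg : (taylor r f).natDegree < f.natDegree + 1 := by
    rw [natDegree_taylor]; omega
  conv_lhs => rw [as_sum_range' _ _ hdeg]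
  rw [map_sum, eval_finset_sum, eval_finset_sum]
  apply Finset.sum_congr rfl
  intro k _
  rw [← smul_X_eq_monomial, map_smul, eval_smul, eval_smul, taylor_coeff, smul_eq_mul, smul_eq_mul]
  ring

lemma natDegree_delta_le (hd : IsDeltaOperator d) [CharZero K] (f : Polynomial K) :
    (d f).natDegree ≤ f.natDegree - 1 := by
  rw [shiftInv_expand hd.1]
  apply Polynomial.natDegree_sum_le_of_forall_le
  intro k hk
  rcases Nat.eq_zero_or_pos k with rfl | hk1
  · simp [delta_one hd]
  · calc ((d (X ^ k)).eval 0 • (hasseDeriv k) f).natDegree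
        ≤ ((hasseDeriv k) f).natDegree := natDegree_smul_le _ _
      _ ≤ f.natDegree - k := natDegree_hasseDeriv_le _ _
      _ ≤ f.natDegree - 1 := by omega

lemma delta_pow_eq_zero (hd : IsDeltaOperator d) [CharZero K] :
    ∀ (m : ℕ) (f : Polynomial K), f.natDegree ≤ m → (d ^ (m + 1)) f = 0 := by
  intro m
  induction m with
  | zero =>
    intro f hf
    obtain ⟨a, ha⟩ := natDegree_eq_zero.mp (Nat.le_zero.mp hf)
    rw [← ha]; simpa using delta_C hd a
  | succ m ih =>
    intro f hf
    have : (d ^ (m + 1 + 1)) f = (d ^ (m + 1)) (d f) := by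
      rw [pow_succ]; rfl
    rw [this]
    exact ih _ (le_trans (natDegree_delta_le hd f) (by omega))

lemma delta_coeff (hd : IsDeltaOperator d) [CharZero K] {c : K} (hdX : d X = C c)
    (f : Polynomial K) (hf : 1 ≤ f.natDegree) :
    (d f).coeff (f.natDegree - 1) = (f.natDegree : K) * c * f.leadingCoeff := by
  rw [shiftInv_expand hd.1, finset_sum_coeff]
  rw [Finset.sum_eq_single 1]
  · rw [coeff_smul, hasseDeriv_coeff]
    have h1 : f.natDegree - 1 + 1 = f.natDegree := by omega
    rw [h1, pow_one, hdX, eval_C, Nat.choose_one_right, leadingCoeff, smul_eq_mul]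
    ring
  · intro k hk hk1
    rcases Nat.eq_zero_or_pos k with rfl | hkp
    · simp [delta_one hd]
    · have hk2 : 2 ≤ k := by omega
      rw [coeff_smul, hasseDeriv_coeff]
      have : f.coeff (f.natDegree - 1 + k) = 0 :=
        coeff_eq_zero_of_natDegree_lt (by omega)
      simp [this]
  · intro h
    exact absurd (Finset.mem_range.mpr (by omega)) h

lemma natDegree_basic (hd : IsDeltaOperator d) [CharZero K] {p : ℕ → Polynomial K}
    (hp : IsBasicSequence d p) : ∀ n, (p n).natDegree ≤ n := by
  obtain ⟨c, hc, hdX⟩ := hd.2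
  intro n
  induction n with
  | zero => simp [hp.1]
  | succ n ih =>
    by_contra h
    push_neg at h
    have h1 : 1 ≤ (p (n + 1)).natDegree := by omega
    have hne : (p (n + 1)) ≠ 0 := by
      intro h0; rw [h0] at h; simp at h
    have hco := delta_coeff hd hdX (p (n + 1)) h1
    have hnz : (d (p (n + 1))).coeff ((p (n + 1)).natDegree - 1) ≠ 0 := by
      rw [hco]
      have hnd : ((p (n + 1)).natDegree : K) ≠ 0 := by
        have : (p (n + 1)).natDegree ≠ 0 := by omega
        exact Nat.cast_ne_zero.mpr this
      exact mul_ne_zero (mul_ne_zero hnd hc) (leadingCoeff_ne_zero.mpr hne)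
    have hle : (p (n + 1)).natDegree - 1 ≤ (d (p (n + 1))).natDegree :=
      le_natDegree_of_ne_zero hnz
    have hdp : d (p (n + 1)) = ((n + 1 : ℕ) : K) • p n := by
      have := hp.2.2 (n + 1) (by omega)
      simpa using this
    have : (d (p (n + 1))).natDegree ≤ n := by
      rw [hdp]
      exact le_trans (natDegree_smul_le _ _) ih
    omega

end


section
variable {K : Type*} [Field K] {d : Module.End K (Polynomial K)}

lemma goncarov_coeff_ne_zero [CharZero K] {z : ℕ → K} {t : ℕ → Polynomial K}
    (ht : IsGoncarovBasis d z t) (m : ℕ) : (t m).coeff m ≠ 0 := by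
  have h := (ht m).2 m
  rw [if_pos rfl] at h
  have hfact : ((m.factorial : K)) ≠ 0 := Nat.cast_ne_zero.mpr m.factorial_ne_zero
  have hm0 : t m ≠ 0 := by
    intro h0; rw [h0] at h; simp at h; exact hfact h.symm
  have hc : (t m).coeff m = (t m).leadingCoeff := by rw [leadingCoeff, (ht m).1]
  rw [hc]; exact leadingCoeff_ne_zero.mpr hm0

lemma goncarov_expand (hd : IsDeltaOperator d) [CharZero K] {z : ℕ → K} {t : ℕ → Polynomial K}
    (ht : IsGoncarovBasis d z t) :
    ∀ (n : ℕ) (f : Polynomial K), f.natDegree ≤ n →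
      f = ∑ i ∈ Finset.range (n + 1),
        ((((d ^ i) f).eval (z i)) / (i.factorial : K)) • t i := by
  intro n
  induction n with
  | zero =>
    intro f hf
    obtain ⟨b, hb⟩ := natDegree_eq_zero.mp (ht 0).1
    have h := (ht 0).2 0
    rw [if_pos rfl, pow_zero, ← hb] at h
    simp at h
    have ht0 : t 0 = 1 := by rw [← hb, h, C_1]
    obtain ⟨c, hc⟩ := natDegree_eq_zero.mp (Nat.le_zero.mp hf)
    rw [Finset.sum_range_one, ht0, pow_zero, ← hc]
    simp [smul_eq_C_mul]
  | succ n ih =>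
    intro f hf
    set a := f.coeff (n + 1) / (t (n + 1)).coeff (n + 1) with ha
    set g := f - a • t (n + 1) with hg
    have hf_eq : f = g + a • t (n + 1) := by rw [hg]; ring
    have hgdeg : g.natDegree ≤ n := by
      rw [natDegree_le_iff_coeff_eq_zero]
      intro N hN
      rcases eq_or_lt_of_le (Nat.succ_le_of_lt hN) with h1 | h1
      · rw [hg, coeff_sub, coeff_smul, ← h1, ha, smul_eq_mul,
          div_mul_cancel₀ _ (goncarov_coeff_ne_zero ht (n + 1)), sub_self]
      · rw [hg, coeff_sub, coeff_smul,
          coeff_eq_zero_of_natDegree_lt (lt_of_le_of_lt hf h1),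
          coeff_eq_zero_of_natDegree_lt (by rw [(ht (n + 1)).1]; exact h1)]
        simp
    have hLg : ∀ i ≤ n, ((d ^ i) g).eval (z i) = ((d ^ i) f).eval (z i) := by
      intro i hi
      rw [hg, map_sub, map_smul, eval_sub, eval_smul, (ht (n + 1)).2 i,
        if_neg (by omega)]
      simp
    have hfact : (((n + 1).factorial : K)) ≠ 0 := Nat.cast_ne_zero.mpr (n + 1).factorial_ne_zero
    have hLtop : ((d ^ (n + 1)) f).eval (z (n + 1)) = a * (((n + 1).factorial : K)) := by
      rw [hf_eq, map_add, map_smul, eval_add, eval_smul,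
        delta_pow_eq_zero hd n g hgdeg, (ht (n + 1)).2 (n + 1), if_pos rfl]
      simp
    calc f = g + a • t (n + 1) := hf_eq
      _ = (∑ i ∈ Finset.range (n + 1),
            ((((d ^ i) g).eval (z i)) / (i.factorial : K)) • t i) + a • t (n + 1) := by
          rw [← ih g hgdeg]
      _ = (∑ i ∈ Finset.range (n + 1),
            ((((d ^ i) f).eval (z i)) / (i.factorial : K)) • t i)
          + ((((d ^ (n + 1)) f).eval (z (n + 1))) / (((n + 1).factorial : K))) • t (n + 1) := by
          congr 1
          · apply Finset.sum_congr rfl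
            intro i hi
            rw [hLg i (by simpa [Nat.lt_succ_iff] using hi)]
          · rw [hLtop, mul_div_assoc, div_self hfact, mul_one]
      _ = ∑ i ∈ Finset.range (n + 1 + 1),
            ((((d ^ i) f).eval (z i)) / (i.factorial : K)) • t i :=
          (Finset.sum_range_succ _ (n + 1)).symm

lemma basic_pow [CharZero K] {p : ℕ → Polynomial K} (hp : IsBasicSequence d p) :
    ∀ (n i : ℕ), i ≤ n → (d ^ i) (p n) = ((n.descFactorial i : ℕ) : K) • p (n - i) := by
  intro n i
  induction i with
  | zero => intro _; simp
  | succ i ih =>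
    intro hi
    have h1 : (d ^ (i + 1)) (p n) = d ((d ^ i) (p n)) := by
      rw [pow_succ']; rfl
    rw [h1, ih (by omega), map_smul, hp.2.2 (n - i) (by omega), smul_smul,
      Nat.descFactorial_succ]
    have : n - i - 1 = n - (i + 1) := by omega
    rw [this]
    push_cast
    ring_nf

end


theorem stmt11 {K : Type*} [Field K] [CharZero K] (d : Module.End K (Polynomial K))
    (hd : IsDeltaOperator d) (z : ℕ → K) (t p : ℕ → Polynomial K)
    (ht : IsGoncarovBasis d z t) (hp : IsBasicSequence d p) :
    (∀ n, p n = ∑ i ∈ Finset.range (n + 1),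
        (n.choose i : K) • ((p (n - i)).eval (z i)) • t i) ∧
    (∀ n, t n = p n - ∑ i ∈ Finset.range n,
        (n.choose i : K) • ((p (n - i)).eval (z i)) • t i) := by
  have part1 : ∀ n, p n = ∑ i ∈ Finset.range (n + 1),
      (n.choose i : K) • ((p (n - i)).eval (z i)) • t i := by
    intro n
    have h := goncarov_expand hd ht n (p n) (natDegree_basic hd hp n)
    rw [h]
    apply Finset.sum_congr rfl
    intro i hi
    have hi' : i ≤ n := by simpa [Nat.lt_succ_iff] using hi
    rw [basic_pow hp n i hi', eval_smul, smul_eq_mul,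
      Nat.descFactorial_eq_factorial_mul_choose, smul_smul]
    have hfact : ((i.factorial : K)) ≠ 0 := Nat.cast_ne_zero.mpr i.factorial_ne_zero
    congr 1
    push_cast
    field_simp
  refine ⟨part1, ?_⟩
  intro n
  have h := part1 n
  rw [Finset.sum_range_succ] at h
  have hterm : ((n.choose n : K)) • ((p (n - n)).eval (z n)) • t n = t n := by
    simp [Nat.choose_self, Nat.sub_self, hp.1]
  rw [hterm] at h
  linear_combination -h
end

section
/- If Z is a constant grid (z_i = c for all i), then the generalized Gončarov basis (t_n) for (𝔡, Z) satisfies the Appell-type binomial identity t_n(x+ξ) = Σ_{i=0}^n C(n,i) t_{n−i}(ξ) p_i(x) for all ξ ∈ K and n, where (p_n) is the basic sequence of 𝔡. -/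
open Polynomial

section Aux
variable {K : Type*} [Field K] {d : Module.End K (Polynomial K)}

lemma shift_comm (hd : IsShiftInvariant d) (b : K) (f : Polynomial K) :
    d (f.comp (X + C b)) = (d f).comp (X + C b) := by
  have h := LinearMap.ext_iff.mp (hd b) f
  simp only [LinearMap.comp_apply] at h
  have e : ∀ g : Polynomial K, shiftOp K b g = g.comp (X + C b) := fun g => by
    simp [shiftOp, aeval_def, Polynomial.comp, algebraMap_eq]
  rw [e, e] at h
  exact h

lemma pow_shift_comm (hd : IsShiftInvariant d) (b : K) (i : ℕ) (f : Polynomial K) :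
    (d ^ i) (f.comp (X + C b)) = ((d ^ i) f).comp (X + C b) := by
  induction i generalizing f with
  | zero => simp
  | succ k ih =>
    rw [pow_succ', Module.End.mul_apply, Module.End.mul_apply, ih, shift_comm hd]

lemma dC (hd : IsDeltaOperator d) (r : K) : d (C r) = 0 := by
  obtain ⟨a, ha, hX⟩ := hd.2
  have h := shift_comm hd.1 r X
  simp only [X_comp] at h
  rw [hX] at h
  simp only [C_comp] at h
  have : d X + d (C r) = C a := by
    rw [← map_add]; simpa using h
  rw [hX] at this
  simpa using this

lemma dC_pow (hd : IsDeltaOperator d) (r : K) {i : ℕ} (hi : 1 ≤ i) : (d ^ i) (C r) = 0 := by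
  obtain ⟨k, rfl⟩ := Nat.exists_eq_add_of_le hi
  rw [add_comm, pow_succ, Module.End.mul_apply, dC hd, map_zero]

lemma dpow_basic {p : ℕ → Polynomial K} (hd : IsDeltaOperator d) (hp : IsBasicSequence d p)
    (n k : ℕ) : (d ^ k) (p n) = (n.descFactorial k : K) • p (n - k) := by
  induction k with
  | zero => simp
  | succ k ih =>
    rw [pow_succ', Module.End.mul_apply, ih]  -- d (d^k (p n))
    rcases Nat.lt_or_ge k n with h | h
    · have h1 : 1 ≤ n - k := by omega
      rw [map_smul, hp.2.2 _ h1]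
      have : n - k - 1 = n - (k + 1) := by omega
      rw [this, smul_smul, Nat.descFactorial_succ]
      push_cast
      ring_nf
    · have h0 : n - k = 0 := by omega
      have h1 : n - (k+1) = 0 := by omega
      have h2 : n.descFactorial (k+1) = 0 := by
        rw [Nat.descFactorial_succ, h0]; simp
      rw [h0, h1, h2, map_smul, hp.1]
      have : d (1 : Polynomial K) = 0 := by
        have := dC hd 1; simpa using this
      rw [this, smul_zero, Nat.cast_zero, zero_smul]

variable {c : K} {t : ℕ → Polynomial K}

lemma sep [CharZero K] (ht : IsGoncarovBasis d (fun _ => c) t) :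
    ∀ m : ℕ, ∀ h : Polynomial K, h.natDegree ≤ m →
      (∀ i, i ≤ m → ((d ^ i) h).eval c = 0) → h = 0 := by
  intro m
  induction m with
  | zero =>
    intro h hdeg hL
    have h0 := hL 0 le_rfl
    simp only [pow_zero, Module.End.one_apply] at h0
    rw [Polynomial.eq_C_of_natDegree_le_zero hdeg] at h0 ⊢
    simp only [eval_C] at h0
    rw [h0, map_zero]
  | succ m ih =>
    intro h hdeg hL
    have htm := ht (m+1)
    have htne : t (m+1) ≠ 0 := by
      intro h0
      have := (htm.2 (m+1))
      simp only [h0, map_zero, eval_zero, if_pos rfl] at this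
      exact (Nat.cast_ne_zero.mpr (Nat.factorial_ne_zero (m+1))) this.symm
    set A : K := (t (m+1)).coeff (m+1) with hA
    have hAne : A ≠ 0 := by
      have hlc := leadingCoeff_ne_zero.mpr htne
      rwa [leadingCoeff, htm.1] at hlc
    set α : K := h.coeff (m+1) / A with hα
    set g : Polynomial K := h - α • t (m+1) with hg
    have hgdeg : g.natDegree ≤ m := by
      rw [natDegree_le_iff_coeff_eq_zero]
      intro j hj
      rcases eq_or_lt_of_le (Nat.succ_le_of_lt hj) with hj1 | hj1
      · simp only [hg, coeff_sub, coeff_smul, smul_eq_mul, ← hj1, hα]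
        field_simp
        simp [hA]
      · have hh : h.coeff j = 0 := coeff_eq_zero_of_natDegree_lt (lt_of_le_of_lt hdeg hj1)
        have htc : (t (m+1)).coeff j = 0 := coeff_eq_zero_of_natDegree_lt (by rw [htm.1]; exact hj1)
        simp [hg, hh, htc]
    have hgL : ∀ i, i ≤ m → ((d ^ i) g).eval c = 0 := by
      intro i hi
      have h1 := hL i (le_trans hi (Nat.le_succ m))
      have h2 := htm.2 i
      simp only [if_neg (by omega : i ≠ m+1)] at h2
      simp [hg, map_sub, map_smul, eval_smul, h1, h2]
    have hg0 : g = 0 := ih g hgdeg hgL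
    have hhα : h = α • t (m+1) := by
      rw [hg] at hg0; exact sub_eq_zero.mp hg0
    have hLm := hL (m+1) le_rfl
    rw [hhα] at hLm
    rw [map_smul, eval_smul, smul_eq_mul, htm.2 (m+1), if_pos rfl] at hLm
    have : α = 0 := by
      have hfac : ((m+1).factorial : K) ≠ 0 := Nat.cast_ne_zero.mpr (Nat.factorial_ne_zero _)
      exact (mul_eq_zero.mp hLm).resolve_right hfac
    rw [hhα, this, zero_smul]

lemma kerd [CharZero K] (hd : IsDeltaOperator d) (ht : IsGoncarovBasis d (fun _ => c) t)
    (h : Polynomial K) (hker : d h = 0) : h = C (h.eval c) := by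
  set g : Polynomial K := h - C (h.eval c) with hg
  have hgL : ∀ i, i ≤ g.natDegree → ((d ^ i) g).eval c = 0 := by
    intro i _
    rcases Nat.eq_zero_or_pos i with rfl | hi
    · simp [hg]
    · have h1 : (d ^ i) h = 0 := by
        obtain ⟨k, rfl⟩ := Nat.exists_eq_add_of_le hi
        rw [add_comm, pow_succ, Module.End.mul_apply, hker, map_zero]
      simp [hg, map_sub, h1, dC_pow hd _ hi]
  have := sep ht g.natDegree g le_rfl hgL
  rw [hg] at this
  exact sub_eq_zero.mp this

lemma binom [CharZero K] {p : ℕ → Polynomial K} (hd : IsDeltaOperator d)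
    (ht : IsGoncarovBasis d (fun _ => c) t) (hp : IsBasicSequence d p) :
    ∀ n : ℕ, ∀ y : K, (p n).comp (X + C y) =
      ∑ i ∈ Finset.range (n + 1), (n.choose i : K) • ((p (n - i)).eval y) • p i := by
  intro n
  induction n with
  | zero =>
    intro y
    simp [hp.1]
  | succ n ih =>
    intro y
    set L : Polynomial K := (p (n+1)).comp (X + C y) with hL
    set R : Polynomial K := ∑ i ∈ Finset.range (n + 2),
      ((n+1).choose i : K) • ((p (n+1 - i)).eval y) • p i with hR
    have hdL : d L = ((n:K)+1) • (p n).comp (X + C y) := by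
      rw [hL, shift_comm hd.1, hp.2.2 (n+1) (Nat.le_add_left 1 n)]
      simp [smul_comp]
    have hdR : d R = ((n:K)+1) • (p n).comp (X + C y) := by
      rw [hR, map_sum]
      have : ∀ i ∈ Finset.range (n+2),
          d (((n+1).choose i : K) • ((p (n+1 - i)).eval y) • p i)
          = ((n+1).choose i : K) • ((p (n+1 - i)).eval y) • d (p i) := by
        intro i _; rw [map_smul, map_smul]
      rw [Finset.sum_congr rfl this, Finset.sum_range_succ']
      simp only [Nat.sub_zero]
      have hz : ((n+1).choose 0 : K) • ((p (n+1)).eval y) • d (p 0) = 0 := by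
        rw [hp.1]
        have : d (1 : Polynomial K) = 0 := by have := dC hd 1; simpa using this
        simp [this]
      rw [hz, add_zero]
      rw [ih y, Finset.smul_sum]
      apply Finset.sum_congr rfl
      intro i hi
      rw [hp.2.2 (i+1) (Nat.le_add_left 1 i)]
      simp only [Nat.add_sub_cancel]
      have hcast : ((n+1).choose (i+1) : K) * ((i:K)+1) = ((n:K)+1) * (n.choose i : K) := by
        have := Nat.add_one_mul_choose_eq n i
        have h2 : ((n+1) * n.choose i : ℕ) = ((n+1).choose (i+1) * (i+1) : ℕ) := this
        exact_mod_cast (congrArg (fun x : ℕ => (x : K)) h2).symm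
      have hsub : n + 1 - (i + 1) = n - i := by omega
      rw [hsub, smul_smul, smul_smul, smul_smul, smul_smul]
      congr 1
      push_cast
      linear_combination (eval y (p (n - i))) * hcast
  -- now d (L - R) = 0
    have hker : d (L - R) = 0 := by rw [map_sub, hdL, hdR, sub_self]
    have hconst := kerd hd ht (L - R) hker
    have heval0 : (L - R).eval 0 = 0 := by
      rw [eval_sub, hL, hR, eval_comp]
      simp only [eval_add, eval_X, eval_C, zero_add]
      rw [eval_finset_sum]
      have hsum : ∑ i ∈ Finset.range (n+2),
          ((((n+1).choose i : K)) • ((p (n+1-i)).eval y) • p i).eval 0 = (p (n+1)).eval y := by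
        rw [Finset.sum_eq_single 0]
        · simp [hp.1]
        · intro i _ hne
          have h1 : 1 ≤ i := Nat.one_le_iff_ne_zero.mpr hne
          simp [eval_smul, hp.2.1 i h1]
        · intro habs; simp at habs
      rw [hsum, sub_self]
    have hval : (L - R).eval c = 0 := by
      rw [hconst, eval_C] at heval0
      exact heval0
    have hLR : L - R = 0 := by rw [hconst, hval, map_zero]
    exact sub_eq_zero.mp hLR

lemma t_eq [CharZero K] {p : ℕ → Polynomial K} (hd : IsDeltaOperator d)
    (ht : IsGoncarovBasis d (fun _ => c) t) (hp : IsBasicSequence d p) (n : ℕ) :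
    t n = (p n).comp (X - C c) := by
  set h := t n - (p n).comp (X - C c) with hh
  have hXc : (X : Polynomial K) - C c = X + C (-c) := by rw [map_neg, sub_eq_add_neg]
  have hL : ∀ i, ((d ^ i) h).eval c = 0 := by
    intro i
    have h1 := (ht n).2 i
    have h2 : ((d ^ i) ((p n).comp (X - C c))).eval c
        = if i = n then (n.factorial : K) else 0 := by
      rw [hXc, pow_shift_comm hd.1, eval_comp]
      simp only [eval_add, eval_X, eval_C, add_neg_cancel]
      rw [dpow_basic hd hp n i]
      rcases eq_or_ne i n with rfl | hne
      · simp [Nat.descFactorial_self, hp.1, eval_smul]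
      · rw [if_neg hne]
        rcases lt_or_gt_of_ne hne with hlt | hgt
        · have := hp.2.1 (n - i) (by omega)
          simp [eval_smul, this]
        · have : n.descFactorial i = 0 := Nat.descFactorial_eq_zero_iff_lt.mpr hgt
          simp [this]
    rw [hh, map_sub, eval_sub, h1, h2]
    simp
  exact sub_eq_zero.mp (sep ht h.natDegree h le_rfl (fun i _ => hL i))

end Aux

theorem stmt14 {K : Type*} [Field K] [CharZero K] (d : Module.End K (Polynomial K))
    (hd : IsDeltaOperator d) (c : K) (t p : ℕ → Polynomial K)
    (ht : IsGoncarovBasis d (fun _ => c) t) (hp : IsBasicSequence d p) :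
    ∀ (ξ : K) (n : ℕ), (t n).comp (X + C ξ) =
      ∑ i ∈ Finset.range (n + 1),
        (n.choose i : K) • ((t (n - i)).eval ξ) • p i := by
  intro ξ n
  have hteq := fun m => t_eq hd ht hp m
  rw [hteq n, comp_assoc]
  have hcomp : ((X : Polynomial K) - C c).comp (X + C ξ) = X + C (ξ - c) := by
    rw [sub_comp, X_comp, C_comp, C_sub]
    ring
  rw [hcomp, binom hd ht hp n (ξ - c)]
  apply Finset.sum_congr rfl
  intro i _
  rw [hteq (n - i), eval_comp]
  simp
end
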